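/- (No arbitrage sub-domain for SSVI.) Let ρ ∈ (−1,1), γ = √(1−ρ²), μ = −ρ/√(1−ρ²), and b > 0 with b·(1+|ρ|) < 2. Let M = sup_{l ∈ ℝ} (−g₂(l)), which is finite and positive (it is attained at the unique minimum point m₂ of g₂ to the right of the positive zero l₂ of g₂). If σ ≥ 8·b·M / (4 − b²·(1+|ρ|)²), then the SSVI is arbitrage-free. -/

import Mathlib

set_option maxHeartbeats 1000000

/-- SVI normalized total variance shape: `N(l) = γ + ρ·l + √(l²+1)`. -/
noncomputable def Nf (γ ρ l : ℝ) : ℝ := γ + ρ * l + Real.sqrt (l ^ 2 + 1)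

/-- `N'(l) = ρ + l/√(l²+1)`. -/
noncomputable def Nf' (ρ l : ℝ) : ℝ := ρ + l / Real.sqrt (l ^ 2 + 1)

/-- `N''(l) = (l²+1)^(−3/2)`. -/
noncomputable def Nf'' (l : ℝ) : ℝ := (l ^ 2 + 1) ^ (-(3 : ℝ) / 2)

/-- `h(l) = 1 − N'(l)·(l+μ)/(2N(l))`. -/
noncomputable def hf (γ ρ μ l : ℝ) : ℝ := 1 - Nf' ρ l * (l + μ) / (2 * Nf γ ρ l)

/-- `g(l) = N'(l)/4`. -/
noncomputable def gf (ρ l : ℝ) : ℝ := Nf' ρ l / 4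

/-- `g₂(l) = N''(l) − N'(l)²/(2N(l))`. -/
noncomputable def g2 (γ ρ l : ℝ) : ℝ := Nf'' l - (Nf' ρ l) ^ 2 / (2 * Nf γ ρ l)

/-- `G₁(l) = (h(l) − b·g(l))·(h(l) + b·g(l))`. -/
noncomputable def G1 (γ b ρ μ l : ℝ) : ℝ :=
  (hf γ ρ μ l - b * gf ρ l) * (hf γ ρ μ l + b * gf ρ l)

/-- Fukasawa (weak no-arbitrage) conditions: both factors of `G₁` are positive on `ℝ`. -/
def FukasawaCond (γ b ρ μ : ℝ) : Prop :=
  ∀ l : ℝ, 0 < hf γ ρ μ l - b * gf ρ l ∧ 0 < hf γ ρ μ l + b * gf ρ l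

/-- No Butterfly arbitrage (Martini–Mingone characterization): Fukasawa conditions plus
`G₁ + (b/(2σ))·g₂ ≥ 0` on `ℝ`. -/
def ArbitrageFree (γ b ρ μ σ : ℝ) : Prop :=
  FukasawaCond γ b ρ μ ∧ ∀ l : ℝ, 0 ≤ G1 γ b ρ μ l + b / (2 * σ) * g2 γ ρ l

section Aux

lemma s_pos (l : ℝ) : 0 < Real.sqrt (l ^ 2 + 1) := Real.sqrt_pos.2 (by positivity)

lemma s_sq (l : ℝ) : (Real.sqrt (l ^ 2 + 1)) ^ 2 = l ^ 2 + 1 := Real.sq_sqrt (by positivity)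

lemma gamma_pos (ρ : ℝ) (h : ρ ^ 2 < 1) : 0 < Real.sqrt (1 - ρ ^ 2) :=
  Real.sqrt_pos.2 (by linarith)

lemma gamma_sq (ρ : ℝ) (h : ρ ^ 2 < 1) : (Real.sqrt (1 - ρ ^ 2)) ^ 2 = 1 - ρ ^ 2 :=
  Real.sq_sqrt (by linarith)

lemma gamma_le_one (ρ : ℝ) (h : ρ ^ 2 < 1) : Real.sqrt (1 - ρ ^ 2) ≤ 1 :=
  Real.sqrt_le_one.2 (by nlinarith [sq_nonneg ρ])

lemma rl_add_s_pos (ρ l : ℝ) (h : ρ ^ 2 < 1) : 0 < ρ * l + Real.sqrt (l ^ 2 + 1) := by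
  have h1 := s_pos l
  have h2 := s_sq l
  nlinarith [sq_nonneg (ρ * l), sq_nonneg l, sq_nonneg (ρ * l - Real.sqrt (l ^ 2 + 1))]

lemma Nf_pos (ρ l : ℝ) (h : ρ ^ 2 < 1) : 0 < Nf (Real.sqrt (1 - ρ ^ 2)) ρ l := by
  have := rl_add_s_pos ρ l h
  have := gamma_pos ρ h
  unfold Nf; linarith

lemma Nf_ge (ρ l : ℝ) (h : ρ ^ 2 < 1) :
    Real.sqrt (1 - ρ ^ 2) ≤ Nf (Real.sqrt (1 - ρ ^ 2)) ρ l := by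
  have := rl_add_s_pos ρ l h
  unfold Nf; linarith

lemma hf_ssvi (ρ l : ℝ) (h : ρ ^ 2 < 1) :
    hf (Real.sqrt (1 - ρ ^ 2)) ρ (-ρ / Real.sqrt (1 - ρ ^ 2)) l =
      1 / 2 + 1 / (2 * Real.sqrt (1 - ρ ^ 2) * Real.sqrt (l ^ 2 + 1)) := by
  have hN0 := Nf_pos ρ l h
  unfold hf Nf' Nf at *
  have hs := s_sq l
  have hg := gamma_sq ρ h
  have hs0 := s_pos l
  have hg0 := gamma_pos ρ h
  set s := Real.sqrt (l ^ 2 + 1) with hsdef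
  set g := Real.sqrt (1 - ρ ^ 2) with hgdef
  clear_value s g
  have hN : g + ρ * l + s ≠ 0 := ne_of_gt hN0
  have e1 : (ρ + l / s) * (l + -ρ / g) = (g + ρ * l + s) * (g * s - 1) / (g * s) := by
    rw [eq_div_iff (by positivity)]
    field_simp
    linear_combination (-s) * hg + (-g) * hs
  rw [e1]
  field_simp
  ring

lemma abs_l_le_s (l : ℝ) : |l| ≤ Real.sqrt (l ^ 2 + 1) := by
  rw [← Real.sqrt_sq_eq_abs]
  exact Real.sqrt_le_sqrt (by linarith)

lemma abs_Nf' (ρ l : ℝ) : |Nf' ρ l| ≤ 1 + |ρ| := by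
  have hs0 := s_pos l
  have h1 : |l / Real.sqrt (l ^ 2 + 1)| ≤ 1 := by
    rw [abs_div, abs_of_pos hs0, div_le_one hs0]
    exact abs_l_le_s l
  calc |Nf' ρ l| ≤ |ρ| + |l / Real.sqrt (l ^ 2 + 1)| := abs_add_le _ _
    _ ≤ 1 + |ρ| := by linarith

lemma Nf''_eq (l : ℝ) : Nf'' l = 1 / (Real.sqrt (l ^ 2 + 1)) ^ 3 := by
  have h0 : (0 : ℝ) ≤ l ^ 2 + 1 := by positivity
  rw [Nf'', show (-(3 : ℝ) / 2) = -((1 / 2) * 3) by norm_num, Real.rpow_neg h0,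
    Real.rpow_mul h0, ← Real.sqrt_eq_rpow,
    show ((3 : ℝ)) = ((3 : ℕ) : ℝ) by norm_num, Real.rpow_natCast, one_div]

lemma Nf''_pos (l : ℝ) : 0 < Nf'' l := by
  rw [Nf''_eq]
  positivity

lemma neg_g2_le (ρ l : ℝ) (h : ρ ^ 2 < 1) :
    -g2 (Real.sqrt (1 - ρ ^ 2)) ρ l ≤ 2 / Real.sqrt (1 - ρ ^ 2) := by
  have hg0 := gamma_pos ρ h
  have hN0 := Nf_pos ρ l h
  have hNge := Nf_ge ρ l h
  have hN'' := Nf''_pos l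
  have habs := abs_Nf' ρ l
  have hρ1 : |ρ| < 1 := by
    rw [abs_lt]; constructor <;> nlinarith [sq_nonneg (ρ - 1), sq_nonneg (ρ + 1)]
  have hb : (Nf' ρ l) ^ 2 ≤ 4 := by
    have := abs_nonneg (Nf' ρ l)
    nlinarith [sq_abs (Nf' ρ l)]
  have h2 : (Nf' ρ l) ^ 2 / (2 * Nf (Real.sqrt (1 - ρ ^ 2)) ρ l) ≤
      4 / (2 * Real.sqrt (1 - ρ ^ 2)) :=
    div_le_div₀ (by norm_num) hb (by positivity) (by linarith)
  have h3 : (4 : ℝ) / (2 * Real.sqrt (1 - ρ ^ 2)) = 2 / Real.sqrt (1 - ρ ^ 2) := by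
    field_simp; ring
  unfold g2
  linarith

lemma neg_g2_pos (ρ : ℝ) (h1 : -1 < ρ) (h2 : ρ < 1) :
    0 < -g2 (Real.sqrt (1 - ρ ^ 2)) ρ (5 / (1 + ρ)) := by
  have hρ : ρ ^ 2 < 1 := by nlinarith
  set l : ℝ := 5 / (1 + ρ) with hldef
  have hu : 0 < 1 + ρ := by linarith
  have hu2 : 1 + ρ < 2 := by linarith
  have hl5 : l * (1 + ρ) = 5 := div_mul_cancel₀ 5 hu.ne'
  have hl0 : 0 < l := by positivity
  clear_value l
  have hs0 := s_pos l
  have hs := s_sq l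
  have hg0 := gamma_pos ρ hρ
  have hg1 := gamma_le_one ρ hρ
  have hN0 := Nf_pos ρ l hρ
  -- s ≥ 1 and s ≥ l
  have hs1 : 1 ≤ Real.sqrt (l ^ 2 + 1) := by nlinarith
  have hsl : l ≤ Real.sqrt (l ^ 2 + 1) := by nlinarith
  -- step 1: (1-ρ) * s ≤ 2 * l
  have hsq : (1 - ρ) ^ 2 * (Real.sqrt (l ^ 2 + 1)) ^ 2 ≤ 4 * l ^ 2 := by
    rw [hs]
    nlinarith [sq_nonneg (1 + ρ), mul_pos hu hu, sq_nonneg ((1 - ρ) * (1 + ρ))]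
  have hstep1 : (1 - ρ) * Real.sqrt (l ^ 2 + 1) ≤ 2 * l := by
    nlinarith [mul_pos hl0 hs0, sq_nonneg ((1 - ρ) * Real.sqrt (l ^ 2 + 1) - 2 * l)]
  -- N' lower bound
  have hN' : (1 + ρ) / 2 ≤ Nf' ρ l := by
    unfold Nf'
    have : (1 - ρ) / 2 ≤ l / Real.sqrt (l ^ 2 + 1) := by
      rw [div_le_div_iff₀ (by norm_num) hs0]
      linarith
    linarith
  -- N upper bound
  have hNle : Nf (Real.sqrt (1 - ρ ^ 2)) ρ l ≤ 3 * Real.sqrt (l ^ 2 + 1) := by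
    unfold Nf
    nlinarith [mul_pos hl0 hs0]
  rw [show g2 (Real.sqrt (1 - ρ ^ 2)) ρ l = Nf'' l -
      (Nf' ρ l) ^ 2 / (2 * Nf (Real.sqrt (1 - ρ ^ 2)) ρ l) from rfl, Nf''_eq]
  set s : ℝ := Real.sqrt (l ^ 2 + 1) with hsdef
  set n : ℝ := Nf (Real.sqrt (1 - ρ ^ 2)) ρ l with hndef
  set p : ℝ := Nf' ρ l with hpdef
  clear_value s n p
  -- the key inequality
  have hkey : 2 * n < p ^ 2 * s ^ 3 := by
    have hc : s ^ 3 = (l ^ 2 + 1) * s := by rw [pow_succ, hs]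
    have h25 : (l * (1 + ρ)) ^ 2 = 25 := by rw [hl5]; norm_num
    have h24 : 24 < (1 + ρ) ^ 2 * (l ^ 2 + 1) := by nlinarith [h25, mul_pos hu hu]
    have hN'2 : (1 + ρ) ^ 2 / 4 ≤ p ^ 2 := by
      nlinarith [mul_le_mul_of_nonneg_left hN' hu.le, hN', hu]
    rw [hc]
    have e3 := mul_le_mul_of_nonneg_right hN'2
      (le_of_lt (mul_pos (by positivity : (0:ℝ) < l ^ 2 + 1) hs0))
    have e4 := mul_lt_mul_of_pos_right h24 hs0
    linarith [e3, e4, hNle]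
  have hlt : 1 / s ^ 3 < p ^ 2 / (2 * n) := by
    rw [div_lt_div_iff₀ (by positivity) (by positivity)]
    nlinarith [hkey]
  linarith

end Aux

/-- explicit no-arbitrage sub-domain for SSVI. -/
theorem ssvi_subdomain (ρ b σ : ℝ) (hρ : ρ ∈ Set.Ioo (-1 : ℝ) 1) (hb : 0 < b)
    (hb2 : b * (1 + |ρ|) < 2) (hσ : 0 < σ) :
    BddAbove (Set.range fun l => -g2 (Real.sqrt (1 - ρ ^ 2)) ρ l) ∧
    0 < sSup (Set.range fun l => -g2 (Real.sqrt (1 - ρ ^ 2)) ρ l) ∧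
    (σ ≥ 8 * b * sSup (Set.range fun l => -g2 (Real.sqrt (1 - ρ ^ 2)) ρ l) /
        (4 - b ^ 2 * (1 + |ρ|) ^ 2) →
      ArbitrageFree (Real.sqrt (1 - ρ ^ 2)) b ρ (-ρ / Real.sqrt (1 - ρ ^ 2)) σ) := by
  obtain ⟨hρ1, hρ2⟩ := hρ
  have hρsq : ρ ^ 2 < 1 := by nlinarith
  have hg0 := gamma_pos ρ hρsq
  have habsρ : |ρ| < 1 := abs_lt.2 ⟨hρ1, hρ2⟩
  have hBdd : BddAbove (Set.range fun l => -g2 (Real.sqrt (1 - ρ ^ 2)) ρ l) := by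
    refine ⟨2 / Real.sqrt (1 - ρ ^ 2), ?_⟩
    rintro x ⟨l, rfl⟩
    exact neg_g2_le ρ l hρsq
  have hMel : -g2 (Real.sqrt (1 - ρ ^ 2)) ρ (5 / (1 + ρ)) ≤
      sSup (Set.range fun l => -g2 (Real.sqrt (1 - ρ ^ 2)) ρ l) :=
    le_csSup hBdd ⟨5 / (1 + ρ), rfl⟩
  have hMpos : 0 < sSup (Set.range fun l => -g2 (Real.sqrt (1 - ρ ^ 2)) ρ l) :=
    lt_of_lt_of_le (neg_g2_pos ρ hρ1 hρ2) hMel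
  refine ⟨hBdd, hMpos, ?_⟩
  intro hσ'
  set M := sSup (Set.range fun l => -g2 (Real.sqrt (1 - ρ ^ 2)) ρ l) with hMdef
  have hD : 0 < 4 - b ^ 2 * (1 + |ρ|) ^ 2 := by
    nlinarith [abs_nonneg ρ, mul_pos hb (by positivity : (0:ℝ) < 1 + |ρ|)]
  -- general bounds for every l
  have hcore : ∀ l : ℝ, 1 / 2 ≤ hf (Real.sqrt (1 - ρ ^ 2)) ρ (-ρ / Real.sqrt (1 - ρ ^ 2)) l ∧
      |b * gf ρ l| ≤ b * (1 + |ρ|) / 4 := by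
    intro l
    constructor
    · rw [hf_ssvi ρ l hρsq]
      have := s_pos l
      have : 0 < 1 / (2 * Real.sqrt (1 - ρ ^ 2) * Real.sqrt (l ^ 2 + 1)) := by positivity
      linarith
    · unfold gf
      rw [abs_mul, abs_of_pos hb, abs_div]
      rw [show |(4:ℝ)| = 4 by norm_num]
      have := abs_Nf' ρ l
      rw [mul_div_assoc]
      gcongr
  have hFuk : FukasawaCond (Real.sqrt (1 - ρ ^ 2)) b ρ (-ρ / Real.sqrt (1 - ρ ^ 2)) := by
    intro l
    obtain ⟨hh, hbg⟩ := hcore l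
    rw [abs_le] at hbg
    constructor <;> nlinarith
  refine ⟨hFuk, ?_⟩
  intro l
  obtain ⟨hh, hbg⟩ := hcore l
  have hG1 : (4 - b ^ 2 * (1 + |ρ|) ^ 2) / 16 ≤
      G1 (Real.sqrt (1 - ρ ^ 2)) b ρ (-ρ / Real.sqrt (1 - ρ ^ 2)) l := by
    unfold G1
    have hb2' : (b * gf ρ l) ^ 2 ≤ (b * (1 + |ρ|) / 4) ^ 2 := by
      rw [← sq_abs (b * gf ρ l)]
      exact pow_le_pow_left₀ (abs_nonneg _) hbg 2
    nlinarith
  have hg2M : -M ≤ g2 (Real.sqrt (1 - ρ ^ 2)) ρ l := by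
    have : -g2 (Real.sqrt (1 - ρ ^ 2)) ρ l ≤ M := le_csSup hBdd ⟨l, rfl⟩
    linarith
  have ht : 0 < b / (2 * σ) := by positivity
  have hbM : b / (2 * σ) * M ≤ (4 - b ^ 2 * (1 + |ρ|) ^ 2) / 16 := by
    rw [ge_iff_le, div_le_iff₀ hD] at hσ'
    rw [div_mul_eq_mul_div, div_le_div_iff₀ (by positivity) (by norm_num)]
    nlinarith
  have := mul_le_mul_of_nonneg_left hg2M ht.le
  nlinarith
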